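/- Non-delegation for the square-root incentive system (Section 4.3): Let n ≥ 2, 2 ≤ m ≤ n, B > 0, and α_1, …, α_n > 0. Then Σ_{i=1}^m B·√(α_i) / (Σ_{j=1}^n √(α_j)) ≥ B·√(Σ_{i=1}^m α_i) / ( √(Σ_{i=1}^m α_i) + Σ_{j=m+1}^n √(α_j) ), with strict inequality when m < n. -/

import Mathlib

/-- Non-delegation for the square-root incentive system (Section 4.3):
`m` players running separate nodes earn at least as much in total as when
they combine their resource power into a single node, with strict inequality
when `m < n`. -/
theorem stmt_15 (n m : ℕ) (hn : 2 ≤ n) (hm : 2 ≤ m) (hmn : m ≤ n)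
    (B : ℝ) (hB : 0 < B) (α : ℕ → ℝ) (hα : ∀ i < n, 0 < α i) :
    (B * Real.sqrt (∑ i ∈ Finset.range m, α i) /
        (Real.sqrt (∑ i ∈ Finset.range m, α i) +
          ∑ j ∈ Finset.Ico m n, Real.sqrt (α j)) ≤
      ∑ i ∈ Finset.range m,
        B * Real.sqrt (α i) / ∑ j ∈ Finset.range n, Real.sqrt (α j)) ∧
    (m < n →
      B * Real.sqrt (∑ i ∈ Finset.range m, α i) /
          (Real.sqrt (∑ i ∈ Finset.range m, α i) +
            ∑ j ∈ Finset.Ico m n, Real.sqrt (α j)) <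
        ∑ i ∈ Finset.range m,
          B * Real.sqrt (α i) / ∑ j ∈ Finset.range n, Real.sqrt (α j)) := by
  set S := ∑ i ∈ Finset.range m, Real.sqrt (α i) with hS
  set T := ∑ j ∈ Finset.Ico m n, Real.sqrt (α j) with hT
  set A := ∑ i ∈ Finset.range m, α i with hA
  set R := Real.sqrt A with hR
  have hαm : ∀ i < m, 0 < α i := fun i hi => hα i (lt_of_lt_of_le hi hmn)
  have hApos : 0 < A := Finset.sum_pos (fun i hi => hαm i (Finset.mem_range.mp hi)) ⟨0, Finset.mem_range.mpr (by omega)⟩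
  have hRpos : 0 < R := Real.sqrt_pos.mpr hApos
  have hSnn : 0 ≤ S := Finset.sum_nonneg fun i _ => Real.sqrt_nonneg _
  have hTnn : 0 ≤ T := Finset.sum_nonneg fun i _ => Real.sqrt_nonneg _
  -- key: R < S
  have key : ∀ k, 2 ≤ k → k ≤ m →
      (∑ i ∈ Finset.range k, α i) < (∑ i ∈ Finset.range k, Real.sqrt (α i))^2 := by
    intro k hk2 hkm
    induction k with
    | zero => omega
    | succ k ih =>
      rcases Nat.lt_or_ge k 2 with hk | hk
      · interval_cases k
        · omega
        · simp only [Finset.sum_range_succ, Finset.sum_range_zero, zero_add]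
          have h0 := hαm 0 (by omega)
          have h1 := hαm 1 (by omega)
          have s0 := Real.sq_sqrt h0.le
          have s1 := Real.sq_sqrt h1.le
          have p0 := Real.sqrt_pos.mpr h0
          have p1 := Real.sqrt_pos.mpr h1
          nlinarith [mul_pos p0 p1]
      · have ihh := ih hk (by omega)
        have hk' : 0 < α k := hαm k (by omega)
        have sk := Real.sq_sqrt hk'.le
        have pk := Real.sqrt_nonneg (α k)
        have hSk : (0:ℝ) ≤ ∑ i ∈ Finset.range k, Real.sqrt (α i) :=
          Finset.sum_nonneg fun i _ => Real.sqrt_nonneg _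
        simp only [Finset.sum_range_succ]
        nlinarith [mul_nonneg hSk pk]
  have hRS : R < S := by
    have := key m hm le_rfl
    rw [← hA, ← hS] at this
    have : R < Real.sqrt (S^2) := by
      rw [hR]; exact Real.sqrt_lt_sqrt hApos.le this
    rwa [Real.sqrt_sq hSnn] at this
  have hsum : ∑ j ∈ Finset.range n, Real.sqrt (α j) = S + T := by
    rw [hS, hT, Finset.range_eq_Ico]
    rw [Finset.range_eq_Ico]
    exact (Finset.sum_Ico_consecutive (fun j => Real.sqrt (α j)) (Nat.zero_le m) hmn).symm
  have hSTpos : 0 < S + T := by linarith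
  have hRTpos : 0 < R + T := by linarith
  have hrhs : (∑ i ∈ Finset.range m, B * Real.sqrt (α i) / ∑ j ∈ Finset.range n, Real.sqrt (α j))
      = B * S / (S + T) := by
    rw [← Finset.sum_div, ← Finset.mul_sum, hsum, ← hS]
  rw [hrhs]
  constructor
  · rw [div_le_div_iff₀ hRTpos hSTpos]
    nlinarith [mul_nonneg (mul_nonneg hB.le hTnn) (sub_nonneg.mpr hRS.le)]
  · intro hmln
    have hTpos : 0 < T := by
      refine Finset.sum_pos (fun j hj => ?_) ⟨m, Finset.mem_Ico.mpr ⟨le_rfl, hmln⟩⟩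
      obtain ⟨_, hjn⟩ := Finset.mem_Ico.mp hj
      exact Real.sqrt_pos.mpr (hα j hjn)
    rw [div_lt_div_iff₀ hRTpos hSTpos]
    nlinarith [mul_pos (mul_pos hB hTpos) (sub_pos.mpr hRS)]
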